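/- Let G be a simple graph on a finite vertex set, v a vertex of even degree, and G' = (G*v) ∖ v the smoothing of G at v. Then G satisfies (EN1) if and only if G' satisfies (EN1). -/

import Mathlib

open Set


/-- The local complement `G*c` of a simple graph `G` at a vertex `c`: distinct
vertices `u`, `v` are adjacent in `G*c` iff (`u ~ v` in `G`) XOR (`u` and `v` are
both neighbours of `c` in `G`). -/
def localComplement {V : Type*} (G : SimpleGraph V) (c : V) : SimpleGraph V where
  Adj u v := u ≠ v ∧ Xor' (G.Adj u v) (G.Adj c u ∧ G.Adj c v)
  symm := ⟨by
    rintro u v ⟨h, hx⟩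
    refine ⟨h.symm, ?_⟩
    rwa [G.adj_comm v u, and_comm]⟩
  loopless := ⟨fun u h => h.1 rfl⟩

/-- The smoothing of `G` at `v`: the induced subgraph of the local complement `G*v`
on the set of vertices different from `v`. -/
def smoothing {V : Type*} (G : SimpleGraph V) (v : V) : SimpleGraph {x : V | x ≠ v} :=
  SimpleGraph.induce {x : V | x ≠ v} (localComplement G v)

/-- (EN1): every vertex has even degree. -/
def EN1 {V : Type*} (G : SimpleGraph V) : Prop :=
  ∀ x : V, Even (G.neighborSet x).ncard

/-- If `v` has even degree then `G` satisfies (EN1) iff the smoothing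
`G' = (G*v) ∖ v` satisfies (EN1). -/
lemma parity_symmDiff {α : Type*} (s t : Set α) (hs : s.Finite) (ht : t.Finite) :
    Even ((symmDiff s t).ncard) ↔ (Even s.ncard ↔ Even t.ncard) := by
  have hfd : (symmDiff s t).Finite := ((hs.union ht).subset symmDiff_le_sup)
  have hd : symmDiff s t ∪ (s ∩ t) = s ∪ t := symmDiff_sup_inf s t
  have h1 : (s ∪ t).ncard = (symmDiff s t).ncard + (s ∩ t).ncard := by
    rw [← hd]
    exact ncard_union_eq (disjoint_symmDiff_inf s t) hfd (hs.inter_of_left t)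
  have h2 := Set.ncard_union_add_ncard_inter s t hs ht
  rw [Nat.even_iff, Nat.even_iff, Nat.even_iff]
  omega


lemma key {V : Type*} [Fintype V] (G : SimpleGraph V) (v : V)
    (hv : Even (G.neighborSet v).ncard) (x : V) (hx : x ≠ v) :
    Even (((smoothing G v).neighborSet ⟨x, hx⟩).ncard) ↔ Even (G.neighborSet x).ncard := by
  classical
  set S : Set V := Subtype.val '' ((smoothing G v).neighborSet ⟨x, hx⟩) with hS
  have hcard : ((smoothing G v).neighborSet ⟨x, hx⟩).ncard = S.ncard :=
    (Set.ncard_image_of_injective _ Subtype.val_injective).symm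
  have hmem : ∀ u : V, u ∈ S ↔ u ≠ v ∧ x ≠ u ∧
      Xor' (G.Adj x u) (G.Adj v x ∧ G.Adj v u) := by
    intro u
    constructor
    · rintro ⟨⟨w, hw⟩, hadj, rfl⟩
      exact ⟨hw, hadj⟩
    · rintro ⟨h1, h2⟩
      exact ⟨⟨u, h1⟩, h2, rfl⟩
  rw [hcard]
  by_cases hvx : G.Adj v x
  · have hSeq : S = (symmDiff (G.neighborSet x) (G.neighborSet v)) \ {v, x} := by
      ext u
      rw [hmem u]
      simp only [Set.mem_diff, Set.mem_symmDiff, SimpleGraph.mem_neighborSet,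
        Set.mem_insert_iff, Set.mem_singleton_iff, Xor', hvx, true_and, not_or]
      constructor
      · rintro ⟨h1, h2, h3⟩
        exact ⟨by tauto, h1, fun h => h2 h.symm⟩
      · rintro ⟨h1, h2, h3⟩
        exact ⟨h2, fun h => h3 h.symm, by tauto⟩
    have hsub : ({v, x} : Set V) ⊆ symmDiff (G.neighborSet x) (G.neighborSet v) := by
      rintro u (rfl | rfl)
      · exact Set.mem_symmDiff.2 (Or.inl ⟨hvx.symm, G.loopless.irrefl u⟩)
      · exact Set.mem_symmDiff.2 (Or.inr ⟨hvx, G.loopless.irrefl u⟩)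
    have hfin : (symmDiff (G.neighborSet x) (G.neighborSet v)).Finite := Set.toFinite _
    have hle : ({v, x} : Set V).ncard ≤ (symmDiff (G.neighborSet x) (G.neighborSet v)).ncard :=
      Set.ncard_le_ncard hsub hfin
    have hpair : ({v, x} : Set V).ncard = 2 := Set.ncard_pair (Ne.symm hx)
    have hdiff : S.ncard = (symmDiff (G.neighborSet x) (G.neighborSet v)).ncard - 2 := by
      rw [hSeq, Set.ncard_diff hsub (Set.toFinite _), hpair]
    have hps := parity_symmDiff (G.neighborSet x) (G.neighborSet v)
      (Set.toFinite _) (Set.toFinite _)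
    rw [hdiff]
    rw [hpair] at hle
    have h5 : Even ((symmDiff (G.neighborSet x) (G.neighborSet v)).ncard - 2) ↔
        Even (symmDiff (G.neighborSet x) (G.neighborSet v)).ncard := by
      rw [Nat.even_iff, Nat.even_iff]; omega
    rw [h5, hps]
    simp [hv]
  · have hSeq : S = G.neighborSet x := by
      ext u
      rw [hmem u]
      constructor
      · rintro ⟨_, _, (⟨h, _⟩ | ⟨⟨hc, _⟩, _⟩)⟩
        · exact h
        · exact absurd hc hvx
      · intro h
        have h1 : u ≠ v := by rintro rfl; exact hvx h.symm
        exact ⟨h1, h.ne, Or.inl ⟨h, fun hc => hvx hc.1⟩⟩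
    rw [hSeq]
  
theorem stmt12 {V : Type*} [Fintype V] (G : SimpleGraph V) (v : V)
    (hv : Even (G.neighborSet v).ncard) :
    EN1 G ↔ EN1 (smoothing G v) := by
  constructor
  · rintro h ⟨x, hx⟩
    exact (key G v hv x hx).2 (h x)
  · intro h x
    by_cases hx : x = v
    · subst hx; exact hv
    · exact (key G v hv x hx).1 (h ⟨x, hx⟩)
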